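/- The function F(W) = σ₂(W)/σ₁(W) is concave on the open convex cone Γ₁⁺ = {W symmetric n×n : tr W > 0}. -/

import Mathlib

open Matrix

/-- σ₂ of a matrix: σ₂(W) = ((tr W)² − tr(W²))/2. -/
noncomputable def sigma2 {n : ℕ} (W : Matrix (Fin n) (Fin n) ℝ) : ℝ :=
  (W.trace ^ 2 - (W * W).trace) / 2

lemma trace_mul_self_nonneg {n : ℕ} (M : Matrix (Fin n) (Fin n) ℝ) (hM : M.IsSymm) :
    0 ≤ (M * M).trace := by
  rw [Matrix.trace]
  apply Finset.sum_nonneg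
  intro i _
  simp only [Matrix.diag_apply, Matrix.mul_apply]
  apply Finset.sum_nonneg
  intro j _
  rw [hM.apply i j]
  exact mul_self_nonneg _

/-- F(W) = σ₂(W)/σ₁(W) is concave on the Gårding cone
Γ₁⁺ = {W symmetric : tr W > 0}. -/
theorem stmt_8 {n : ℕ} :
    ConcaveOn ℝ {W : Matrix (Fin n) (Fin n) ℝ | W.IsSymm ∧ 0 < W.trace}
      (fun W => sigma2 W / W.trace) := by
  constructor
  · intro W hW V hV a b ha hb hab
    refine ⟨?_, ?_⟩
    · exact (hW.1.smul a).add (hV.1.smul b)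
    · have := hW.2; have := hV.2
      simp only [Matrix.trace_add, Matrix.trace_smul, smul_eq_mul]
      rcases eq_or_lt_of_le ha with h | h
      · simp [← h] at hab ⊢; nlinarith
      · nlinarith [mul_nonneg hb hV.2.le]
  · intro W hW V hV a b ha hb hab
    obtain ⟨hWs, hWt⟩ := hW
    obtain ⟨hVs, hVt⟩ := hV
    set s := W.trace with hs
    set t := V.trace with ht
    set qW := (W * W).trace with hqW
    set qV := (V * V).trace with hqV
    set p := (W * V).trace with hp
    have htr : (a • W + b • V).trace = a * s + b * t := by
      simp [Matrix.trace_add, Matrix.trace_smul, smul_eq_mul]; rfl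
    have htrpos : 0 < a * s + b * t := by
      rcases eq_or_lt_of_le ha with h | h
      · simp [← h] at hab ⊢; nlinarith
      · nlinarith [mul_nonneg hb hVt.le]
    have hsq : ((a • W + b • V) * (a • W + b • V)).trace
        = a ^ 2 * qW + 2 * (a * b) * p + b ^ 2 * qV := by
      simp only [add_mul, mul_add, Matrix.smul_mul, Matrix.mul_smul, Matrix.trace_add,
        Matrix.trace_smul, smul_eq_mul, Matrix.trace_mul_comm V W, ← hp, ← hqW, ← hqV]
      ring
    have hkey : 0 ≤ t ^ 2 * qW - 2 * (s * t) * p + s ^ 2 * qV := by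
      have hsymm : (t • W - s • V).IsSymm := (hWs.smul t).sub (hVs.smul s)
      have h0 := trace_mul_self_nonneg _ hsymm
      have hexp : ((t • W - s • V) * (t • W - s • V)).trace
          = t ^ 2 * qW - 2 * (s * t) * p + s ^ 2 * qV := by
        simp only [sub_mul, mul_sub, Matrix.smul_mul, Matrix.mul_smul, Matrix.trace_sub,
          Matrix.trace_smul, smul_eq_mul, Matrix.trace_mul_comm V W, ← hp, ← hqW, ← hqV]
        ring
      linarith [hexp ▸ h0]
    simp only [smul_eq_mul, sigma2, htr, hsq, ← hs, ← ht, ← hqW, ← hqV]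
    rw [div_div, div_div, div_div, ← mul_div_assoc, ← mul_div_assoc,
      div_add_div _ _ (by positivity : (2:ℝ) * s ≠ 0) (by positivity : (2:ℝ) * t ≠ 0),
      div_le_div_iff₀ (by positivity) (by positivity)]
    nlinarith [mul_pos hWt hVt, mul_nonneg (mul_nonneg ha hb) hkey,
      mul_nonneg (mul_nonneg (mul_nonneg ha hb) hkey) (mul_pos hWt hVt).le]
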